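/- Let 0 < τ₀ < τ₁ and c ≥ 0, S ∈ ℝ. Suppose v : [S, ∞) → ℝ is twice differentiable, v ≥ 0, v is bounded, v(s) → 0 as s → ∞, and v''(s) ≥ τ₁²·v(s) − c·e^{−τ₀·s} for all s ≥ S. Then there exists a constant C > 0 such that v(s) ≤ C·e^{−τ₀·s} for all s ≥ S. -/

import Mathlib

open Real Filter Set

lemma monoOn_of_hasDerivAt' {f f' : ℝ → ℝ} {a : ℝ}
    (hd : ∀ x ∈ Set.Ici a, HasDerivAt f (f' x) x)
    (h0 : ∀ x ∈ Set.Ici a, 0 ≤ f' x) : MonotoneOn f (Set.Ici a) := by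
  apply monotoneOn_of_deriv_nonneg (convex_Ici a)
    (fun x hx => (hd x hx).continuousAt.continuousWithinAt)
  · intro x hx
    rw [interior_Ici] at hx
    exact (hd x (Set.Ioi_subset_Ici_self hx)).differentiableAt.differentiableWithinAt
  · intro x hx
    rw [interior_Ici] at hx
    rw [(hd x (Set.Ioi_subset_Ici_self hx)).deriv]
    exact h0 x (Set.Ioi_subset_Ici_self hx)

theorem stmt6 (τ₀ τ₁ c S : ℝ) (h0 : 0 < τ₀) (h01 : τ₀ < τ₁) (hc : 0 ≤ c)
    (v v' v'' : ℝ → ℝ)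
    (hd1 : ∀ s, S ≤ s → HasDerivAt v (v' s) s)
    (hd2 : ∀ s, S ≤ s → HasDerivAt v' (v'' s) s)
    (hnn : ∀ s, S ≤ s → 0 ≤ v s)
    (hbd : ∃ M : ℝ, ∀ s, S ≤ s → v s ≤ M)
    (hineq : ∀ s, S ≤ s → τ₁ ^ 2 * v s - c * Real.exp (-τ₀ * s) ≤ v'' s)
    (hlim : Filter.Tendsto v Filter.atTop (nhds 0)) :
    ∃ C : ℝ, 0 < C ∧ ∀ s, S ≤ s → v s ≤ C * Real.exp (-τ₀ * s) := by
  obtain ⟨M, hM⟩ := hbd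
  have hτ1 : 0 < τ₁ := h0.trans h01
  have hτsq : 0 < τ₁ ^ 2 - τ₀ ^ 2 := by nlinarith
  set C : ℝ := max (c / (τ₁ ^ 2 - τ₀ ^ 2)) (v S * Real.exp (τ₀ * S)) + 1 with hCdef
  have hmax0 : 0 ≤ max (c / (τ₁ ^ 2 - τ₀ ^ 2)) (v S * Real.exp (τ₀ * S)) :=
    le_trans (div_nonneg hc hτsq.le) (le_max_left _ _)
  have hCpos : 0 < C := by positivity
  have hCc : c ≤ C * (τ₁ ^ 2 - τ₀ ^ 2) := by
    have h1 : c / (τ₁ ^ 2 - τ₀ ^ 2) ≤ C := by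
      rw [hCdef]
      have := le_max_left (c / (τ₁ ^ 2 - τ₀ ^ 2)) (v S * Real.exp (τ₀ * S))
      linarith
    calc c = c / (τ₁ ^ 2 - τ₀ ^ 2) * (τ₁ ^ 2 - τ₀ ^ 2) := by field_simp
    _ ≤ C * (τ₁ ^ 2 - τ₀ ^ 2) := by
        exact mul_le_mul_of_nonneg_right h1 hτsq.le
  have hCS : v S ≤ C * Real.exp (-τ₀ * S) := by
    have h1 : v S * Real.exp (τ₀ * S) ≤ C := by
      rw [hCdef]
      have := le_max_right (c / (τ₁ ^ 2 - τ₀ ^ 2)) (v S * Real.exp (τ₀ * S))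
      linarith
    have h2 := mul_le_mul_of_nonneg_right h1 (Real.exp_pos (-τ₀ * S)).le
    calc v S = v S * Real.exp (τ₀ * S) * Real.exp (-τ₀ * S) := by
          rw [mul_assoc, ← Real.exp_add]; simp
    _ ≤ C * Real.exp (-τ₀ * S) := h2
  clear_value C
  -- notation
  set g : ℝ → ℝ := fun s => v s - C * Real.exp (-τ₀ * s) with hgdef
  set g' : ℝ → ℝ := fun s => v' s + C * τ₀ * Real.exp (-τ₀ * s) with hg'def
  set w : ℝ → ℝ := fun s => g' s + τ₁ * g s with hwdef
  have hE : ∀ s : ℝ, HasDerivAt (fun x => Real.exp (-τ₀ * x)) (-τ₀ * Real.exp (-τ₀ * s)) s := by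
    intro s
    have h := ((hasDerivAt_id s).const_mul (-τ₀)).exp
    simpa [mul_comm] using h
  have hg : ∀ s ∈ Set.Ici S, HasDerivAt g (g' s) s := by
    intro s hs
    have h := (hd1 s hs).sub ((hE s).const_mul C)
    refine h.congr_deriv ?_
    simp only [hg'def]; ring
  have hw : ∀ s ∈ Set.Ici S, HasDerivAt g' (v'' s - C * τ₀ ^ 2 * Real.exp (-τ₀ * s)) s := by
    intro s hs
    have h := (hd2 s hs).add ((hE s).const_mul (C * τ₀))
    refine h.congr_deriv ?_
    ring
  have hkey : ∀ s ∈ Set.Ici S, τ₁ ^ 2 * g s ≤ v'' s - C * τ₀ ^ 2 * Real.exp (-τ₀ * s) := by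
    intro s hs
    have h1 := hineq s hs
    have h2 := (Real.exp_pos (-τ₀ * s)).le
    simp only [hgdef]
    nlinarith [mul_le_mul_of_nonneg_right hCc h2]
  -- W = exp(-τ₁ s) * w is monotone
  have hEτ : ∀ s : ℝ, HasDerivAt (fun x => Real.exp (-τ₁ * x)) (-τ₁ * Real.exp (-τ₁ * s)) s := by
    intro s
    have h := ((hasDerivAt_id s).const_mul (-τ₁)).exp
    simpa [mul_comm] using h
  have hwD : ∀ s ∈ Set.Ici S, HasDerivAt w
      (v'' s - C * τ₀ ^ 2 * Real.exp (-τ₀ * s) + τ₁ * g' s) s := by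
    intro s hs
    exact (hw s hs).add ((hg s hs).const_mul τ₁)
  have hWmono : MonotoneOn (fun s => Real.exp (-τ₁ * s) * w s) (Set.Ici S) := by
    apply monoOn_of_hasDerivAt'
      (f' := fun s => -τ₁ * Real.exp (-τ₁ * s) * w s +
        Real.exp (-τ₁ * s) * (v'' s - C * τ₀ ^ 2 * Real.exp (-τ₀ * s) + τ₁ * g' s))
    · intro s hs
      exact (hEτ s).mul (hwD s hs)
    · intro s hs
      have h1 := hkey s hs
      have h2 := (Real.exp_pos (-τ₁ * s)).le
      have : -τ₁ * Real.exp (-τ₁ * s) * w s +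
          Real.exp (-τ₁ * s) * (v'' s - C * τ₀ ^ 2 * Real.exp (-τ₀ * s) + τ₁ * g' s)
          = Real.exp (-τ₁ * s) * ((v'' s - C * τ₀ ^ 2 * Real.exp (-τ₀ * s)) - τ₁ ^ 2 * g s) := by
        simp only [hwdef]; ring
      rw [this]
      exact mul_nonneg h2 (by linarith)
  -- Claim: w ≤ 0 on Ici S
  have hwle : ∀ s ∈ Set.Ici S, w s ≤ 0 := by
    by_contra hcon
    push_neg at hcon
    obtain ⟨s₁, hs₁, hws₁⟩ := hcon
    set ε : ℝ := Real.exp (-τ₁ * s₁) * w s₁ with hεdef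
    have hεpos : 0 < ε := mul_pos (Real.exp_pos _) hws₁
    clear_value ε
    have hwlb : ∀ s ∈ Set.Ici s₁, ε * Real.exp (τ₁ * s) ≤ w s := by
      intro s hs
      have h1 : ε ≤ Real.exp (-τ₁ * s) * w s := by
        rw [hεdef]
        exact hWmono hs₁ (Set.mem_Ici.mpr (le_trans (Set.mem_Ici.mp hs₁) (Set.mem_Ici.mp hs))) hs
      have h2 := mul_le_mul_of_nonneg_right h1 (Real.exp_pos (τ₁ * s)).le
      calc ε * Real.exp (τ₁ * s) ≤ Real.exp (-τ₁ * s) * w s * Real.exp (τ₁ * s) := h2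
      _ = w s * (Real.exp (-τ₁ * s) * Real.exp (τ₁ * s)) := by ring
      _ = w s := by rw [← Real.exp_add]; simp
    -- H is monotone on Ici s₁
    have hEp : ∀ s : ℝ, HasDerivAt (fun x => Real.exp (τ₁ * x)) (τ₁ * Real.exp (τ₁ * s)) s := by
      intro s
      have h := ((hasDerivAt_id s).const_mul τ₁).exp
      simpa [mul_comm] using h
    have hE2 : ∀ s : ℝ, HasDerivAt (fun x => Real.exp (2 * τ₁ * x)) (2 * τ₁ * Real.exp (2 * τ₁ * s)) s := by
      intro s
      have h := ((hasDerivAt_id s).const_mul (2 * τ₁)).exp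
      simpa [mul_comm] using h
    have hHmono : MonotoneOn
        (fun s => Real.exp (τ₁ * s) * g s - ε / (2 * τ₁) * Real.exp (2 * τ₁ * s)) (Set.Ici s₁) := by
      apply monoOn_of_hasDerivAt'
        (f' := fun s => (τ₁ * Real.exp (τ₁ * s) * g s + Real.exp (τ₁ * s) * g' s) -
          ε / (2 * τ₁) * (2 * τ₁ * Real.exp (2 * τ₁ * s)))
      · intro s hs
        exact ((hEp s).mul (hg s (Set.mem_Ici.mpr (le_trans (Set.mem_Ici.mp hs₁) (Set.mem_Ici.mp hs))))).sub ((hE2 s).const_mul (ε / (2 * τ₁)))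
      · intro s hs
        have h1 := hwlb s hs
        have h2 : ε / (2 * τ₁) * (2 * τ₁ * Real.exp (2 * τ₁ * s)) = ε * Real.exp (2 * τ₁ * s) := by
          field_simp
        have h3 : Real.exp (τ₁ * s) * Real.exp (τ₁ * s) = Real.exp (2 * τ₁ * s) := by
          rw [← Real.exp_add]; ring_nf
        have h4 : τ₁ * Real.exp (τ₁ * s) * g s + Real.exp (τ₁ * s) * g' s
            = Real.exp (τ₁ * s) * w s := by simp only [hwdef]; ring
        rw [h4, h2]
        have h5 := mul_le_mul_of_nonneg_left h1 (Real.exp_pos (τ₁ * s)).le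
        calc (0:ℝ) = Real.exp (τ₁ * s) * (ε * Real.exp (τ₁ * s)) - ε * Real.exp (2 * τ₁ * s) := by
              rw [← h3]; ring
        _ ≤ Real.exp (τ₁ * s) * w s - ε * Real.exp (2 * τ₁ * s) := by linarith
    set A : ℝ := Real.exp (τ₁ * s₁) * g s₁ - ε / (2 * τ₁) * Real.exp (2 * τ₁ * s₁) with hAdef
    clear_value A
    have hglb : ∀ s ∈ Set.Ici s₁,
        Real.exp (-τ₁ * s) * A + ε / (2 * τ₁) * Real.exp (τ₁ * s) ≤ g s := by
      intro s hs
      have h1 : A + ε / (2 * τ₁) * Real.exp (2 * τ₁ * s) ≤ Real.exp (τ₁ * s) * g s := by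
        have := hHmono (Set.self_mem_Ici) hs hs
        linarith
      have h2 := mul_le_mul_of_nonneg_left h1 (Real.exp_pos (-τ₁ * s)).le
      have h3 : Real.exp (-τ₁ * s) * Real.exp (τ₁ * s) = 1 := by
        rw [← Real.exp_add]; simp
      calc Real.exp (-τ₁ * s) * A + ε / (2 * τ₁) * Real.exp (τ₁ * s)
          = Real.exp (-τ₁ * s) * (A + ε / (2 * τ₁) * Real.exp (2 * τ₁ * s)) := by
            have h4 : Real.exp (-τ₁ * s) * Real.exp (2 * τ₁ * s) = Real.exp (τ₁ * s) := by
              rw [← Real.exp_add]; ring_nf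
            rw [mul_add, ← mul_assoc (Real.exp (-τ₁ * s)), mul_comm (Real.exp (-τ₁ * s)) (ε / (2*τ₁)), mul_assoc, h4]
      _ ≤ Real.exp (-τ₁ * s) * (Real.exp (τ₁ * s) * g s) := h2
      _ = (Real.exp (-τ₁ * s) * Real.exp (τ₁ * s)) * g s := by ring
      _ = g s := by rw [h3, one_mul]
    -- lower bound tends to atTop, contradiction with g ≤ M
    have ht1 : Tendsto (fun s : ℝ => -τ₁ * s) atTop atBot :=
      Tendsto.const_mul_atTop_of_neg (neg_neg_iff_pos.mpr hτ1) tendsto_id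
    have ht2 : Tendsto (fun s : ℝ => Real.exp (-τ₁ * s) * A) atTop (nhds 0) := by
      have := (Real.tendsto_exp_atBot.comp ht1).mul_const A
      simpa using this
    have ht3 : Tendsto (fun s : ℝ => ε / (2 * τ₁) * Real.exp (τ₁ * s)) atTop atTop := by
      apply Tendsto.const_mul_atTop (by positivity)
      exact Real.tendsto_exp_atTop.comp (Tendsto.const_mul_atTop hτ1 tendsto_id)
    have ht : Tendsto (fun s : ℝ => Real.exp (-τ₁ * s) * A + ε / (2 * τ₁) * Real.exp (τ₁ * s))
        atTop atTop := ht2.add_atTop ht3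
    have hev : ∀ᶠ s : ℝ in atTop, M < Real.exp (-τ₁ * s) * A + ε / (2 * τ₁) * Real.exp (τ₁ * s) :=
      ht.eventually_gt_atTop M
    obtain ⟨s₂, hs₂⟩ := (hev.and (eventually_ge_atTop s₁)).exists
    have hgM : g s₂ ≤ M := by
      have h1 := hM s₂ (le_trans hs₁ hs₂.2)
      have h2 := (Real.exp_pos (-τ₀ * s₂)).le
      simp only [hgdef]
      nlinarith
    have h6 := hglb s₂ hs₂.2
    exact absurd (le_trans h6 hgM) (not_le.mpr hs₂.1)
  -- w ≤ 0: G = exp(τ₁ s) g is antitone, so g ≤ 0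
  have hEp : ∀ s : ℝ, HasDerivAt (fun x => Real.exp (τ₁ * x)) (τ₁ * Real.exp (τ₁ * s)) s := by
    intro s
    have h := ((hasDerivAt_id s).const_mul τ₁).exp
    simpa [mul_comm] using h
  have hGanti : MonotoneOn (fun s => -(Real.exp (τ₁ * s) * g s)) (Set.Ici S) := by
    apply monoOn_of_hasDerivAt'
      (f' := fun s => -(τ₁ * Real.exp (τ₁ * s) * g s + Real.exp (τ₁ * s) * g' s))
    · intro s hs
      exact ((hEp s).mul (hg s hs)).neg
    · intro s hs
      have h1 := hwle s hs
      have h2 : τ₁ * Real.exp (τ₁ * s) * g s + Real.exp (τ₁ * s) * g' s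
          = Real.exp (τ₁ * s) * w s := by simp only [hwdef]; ring
      rw [h2]
      have := mul_nonpos_of_nonneg_of_nonpos (Real.exp_pos (τ₁ * s)).le h1
      linarith
  refine ⟨C, hCpos, fun s hs => ?_⟩
  have h1 : -(Real.exp (τ₁ * S) * g S) ≤ -(Real.exp (τ₁ * s) * g s) :=
    hGanti Set.self_mem_Ici hs hs
  have h2 : g S ≤ 0 := by simp only [hgdef]; linarith
  have h3 : Real.exp (τ₁ * s) * g s ≤ 0 := by
    have := mul_nonpos_of_nonneg_of_nonpos (Real.exp_pos (τ₁ * S)).le h2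
    linarith
  have h4 : g s ≤ 0 := by nlinarith [Real.exp_pos (τ₁ * s)]
  simp only [hgdef] at h4
  linarith
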